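/- Let P(t) be a C¹ family of orthogonal projections and let χ(t) solve the ODE ∂_t χ(t) = [∂_t P(t), P(t)] χ(t) with initial condition χ(0) ∈ Ran P(0). Then χ(t) ∈ Ran P(t) for all t and ⟨χ(t), ∂_t χ(t)⟩ = 0 whenever ∥χ(0)∥ is arbitrary (in particular the norm ∥χ(t)∥ is conserved). -/

import Mathlib

open ContinuousLinearMap
open scoped InnerProductSpace

/-- Kato parallel transport: if `P t` is a `C¹` family of orthogonal projections and
`χ` solves `∂ₜχ = [∂ₜP, P] χ` with `χ 0 ∈ Ran (P 0)`, then `χ t ∈ Ran (P t)` for all `t`,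
`⟪χ t, ∂ₜχ t⟫ = 0`, and the norm `‖χ t‖` is conserved. -/
theorem kato_parallel_transport
    {H : Type*} [NormedAddCommGroup H] [InnerProductSpace ℂ H] [CompleteSpace H]
    (P P' : ℝ → H →L[ℂ] H)
    (hPderiv : ∀ t, HasDerivAt P (P' t) t)
    (hP'cont : Continuous P')
    (hidem : ∀ t, P t ∘L P t = P t)
    (hsa : ∀ t, ContinuousLinearMap.adjoint (P t) = P t)
    (χ χ' : ℝ → H)
    (hχderiv : ∀ t, HasDerivAt χ (χ' t) t)
    (hODE : ∀ t, χ' t = (P' t ∘L P t - P t ∘L P' t) (χ t))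
    (hinit : P 0 (χ 0) = χ 0) :
    ∀ t : ℝ, P t (χ t) = χ t ∧ ⟪χ t, χ' t⟫_ℂ = 0 ∧ ‖χ t‖ = ‖χ 0‖ := by
  classical
  -- restrict scalars to ℝ so that calculus lemmas on CLMs apply
  set R : (H →L[ℂ] H) → (H →L[ℝ] H) := ContinuousLinearMap.restrictScalars ℝ with hR
  have hQderiv : ∀ t, HasDerivAt (fun s => R (P s)) (R (P' t)) t := fun t =>
    (ContinuousLinearMap.restrictScalarsL ℂ H H ℝ ℝ).hasFDerivAt.comp_hasDerivAt t (hPderiv t)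
  -- Leibniz identity for the derivative of P² = P, at the vector level
  have hLeib : ∀ t (x : H), P' t (P t x) + P t (P' t x) = P' t x := by
    intro t x
    have h1 : HasDerivAt (fun s => R (P s) ∘L R (P s))
        ((R (P' t)) ∘L (R (P t)) + (R (P t)) ∘L (R (P' t))) t :=
      (hQderiv t).clm_comp (hQderiv t)
    have h2 : (fun s => R (P s) ∘L R (P s)) = fun s => R (P s) := by
      funext s
      ext x
      exact congrArg (fun A => A x) (hidem s)
    rw [h2] at h1
    have h3 := h1.unique (hQderiv t)
    have h4 := congrArg (fun A => A x) h3
    simpa [hR] using h4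
  -- P P' P = 0 at the vector level
  have hzero : ∀ t (x : H), P t (P' t (P t x)) = 0 := by
    intro t x
    have h1 := hLeib t (P t x)
    have h2 : P t (P t x) = P t x := congrArg (fun A => A x) (hidem t)
    rw [h2] at h1
    exact add_left_cancel (a := P' t (P t x)) (by rw [h1, add_zero])
  -- the defect y t = P t (χ t) - χ t
  set y : ℝ → H := fun t => P t (χ t) - χ t with hy
  have hyderiv : ∀ t, HasDerivAt y (-(P' t (y t))) t := by
    intro t
    have h1 : HasDerivAt (fun s => P s (χ s)) (P' t (χ t) + P t (χ' t)) t :=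
      (hQderiv t).clm_apply (hχderiv t)
    have h2 : HasDerivAt y (P' t (χ t) + P t (χ' t) - χ' t) t := h1.sub (hχderiv t)
    have e : P' t (χ t) + P t (χ' t) - χ' t = -(P' t (y t)) := by
      rw [hODE t]
      simp only [hy, ContinuousLinearMap.sub_apply, ContinuousLinearMap.comp_apply, map_sub]
      rw [hzero t (χ t)]
      have h3 : P t (P t (P' t (χ t))) = P t (P' t (χ t)) :=
        congrArg (fun A => A (P' t (χ t))) (hidem t)
      rw [h3]
      abel
    exact e ▸ h2
  -- y vanishes identically, by Grönwall-type uniqueness on each interval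
  have hy0 : y 0 = 0 := by simp [hy, hinit]
  have hyzero : ∀ t, y t = 0 := by
    intro t
    set a : ℝ := -(|t| + 1) with ha
    set b : ℝ := |t| + 1 with hb
    have habs := abs_nonneg t
    have hab : a < b := by rw [ha, hb]; linarith
    have hta : a ≤ t := by
      have := neg_abs_le t
      simp only [ha]; linarith
    have htb : t ≤ b := by
      have := le_abs_self t
      simp only [hb]; linarith
    -- the clamped vector field
    set cl : ℝ → ℝ := fun s => max a (min s b) with hcl
    have hclmem : ∀ s, cl s ∈ Set.Icc a b := by
      intro s
      constructor
      · exact le_max_left _ _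
      · simp only [hcl, max_le_iff]
        exact ⟨hab.le, min_le_right _ _⟩
    have hcleq : ∀ s ∈ Set.Ioo a b, cl s = s := by
      intro s hs
      simp only [hcl]
      rw [min_eq_left hs.2.le, max_eq_right hs.1.le]
    -- uniform bound on ‖P'‖ on [a, b]
    obtain ⟨C, hC⟩ := (isCompact_Icc (a := a) (b := b)).exists_bound_of_continuousOn
      hP'cont.continuousOn
    set K : NNReal := ⟨max C 0, le_max_right _ _⟩ with hK
    set v : ℝ → H → H := fun s x => -(P' (cl s) x) with hv
    have hlip : ∀ s, LipschitzWith K (v s) := by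
      intro s
      apply LipschitzWith.of_dist_le_mul
      intro x z
      rw [dist_eq_norm, dist_eq_norm]
      have e : v s x - v s z = P' (cl s) (z - x) := by
        simp only [hv, map_sub]; abel
      rw [e]
      calc ‖P' (cl s) (z - x)‖ ≤ ‖P' (cl s)‖ * ‖z - x‖ := (P' (cl s)).le_opNorm _
        _ ≤ K * ‖z - x‖ := by
            apply mul_le_mul_of_nonneg_right _ (norm_nonneg _)
            exact le_trans (hC _ (hclmem s)) (le_max_left _ _)
        _ = K * ‖x - z‖ := by rw [norm_sub_rev]
    have h0mem : (0 : ℝ) ∈ Set.Ioo a b := by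
      constructor
      · rw [ha]; linarith
      · rw [hb]; linarith
    have heq : Set.EqOn y (fun _ => (0 : H)) (Set.Icc a b) := by
      apply ODE_solution_unique_of_mem_Icc (s := fun _ => (Set.univ : Set H))
        (fun s _ => (hlip s).lipschitzOnWith) h0mem
      · exact fun s _ => (hyderiv s).continuousAt.continuousWithinAt
      · intro s hs
        have := hyderiv s
        simpa [hv, hcleq s hs] using this
      · exact fun _ _ => Set.mem_univ _
      · exact continuousOn_const
      · intro s _
        simpa [hv] using (hasDerivAt_const s (0 : H))
      · exact fun _ _ => Set.mem_univ _
      · simpa using hy0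
    exact heq ⟨hta, htb⟩
  have hP : ∀ t, P t (χ t) = χ t := by
    intro t
    have := hyzero t
    simp only [hy, sub_eq_zero] at this
    exact this
  -- orthogonality
  have hinner : ∀ t, ⟪χ t, χ' t⟫_ℂ = 0 := by
    intro t
    rw [hODE t]
    simp only [ContinuousLinearMap.sub_apply, ContinuousLinearMap.comp_apply, hP t]
    rw [inner_sub_right]
    have h1 : ⟪χ t, P t (P' t (χ t))⟫_ℂ = ⟪χ t, P' t (χ t)⟫_ℂ := by
      conv_lhs => rw [← hsa t]
      rw [ContinuousLinearMap.adjoint_inner_right, hP t]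
    rw [h1, sub_self]
  -- norm conservation
  have hconst : ∀ t, ⟪χ t, χ t⟫_ℂ = ⟪χ 0, χ 0⟫_ℂ := by
    intro t
    have hd : ∀ s, HasDerivAt (fun u => ⟪χ u, χ u⟫_ℂ) 0 s := by
      intro s
      have := (hχderiv s).inner ℂ (hχderiv s)
      have ha' : ⟪χ' s, χ s⟫_ℂ = 0 := by
        rw [← inner_conj_symm, hinner s, map_zero]
      have h2 : ⟪χ s, χ' s⟫_ℂ + ⟪χ' s, χ s⟫_ℂ = 0 := by
        rw [hinner s, ha', add_zero]
      rwa [h2] at this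
    have : (fun u => ⟪χ u, χ u⟫_ℂ) t = (fun u => ⟪χ u, χ u⟫_ℂ) 0 :=
      is_const_of_deriv_eq_zero (fun s => (hd s).differentiableAt)
        (fun s => (hd s).deriv) t 0
    exact this
  intro t
  refine ⟨hP t, hinner t, ?_⟩
  have h2 : ‖χ t‖ ^ 2 = ‖χ 0‖ ^ 2 := by
    rw [← inner_self_eq_norm_sq (𝕜 := ℂ), ← inner_self_eq_norm_sq (𝕜 := ℂ), hconst t]
  have h3 := congrArg Real.sqrt h2
  rwa [Real.sqrt_sq (norm_nonneg _), Real.sqrt_sq (norm_nonneg _)] at h3
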